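/- Let K be a field, let ℤ^N carry a translation-invariant linear order, and let Ψ : K∖{0} → ℤ^N satisfy Ψ(fg) = Ψ(f) + Ψ(g) for all nonzero f, g and Ψ(f+g) ≤ max(Ψ(f), Ψ(g)) whenever f, g, f+g are all nonzero. Fix an index k ∈ {1,…,N}, nonzero elements ŷ₁, …, ŷ_N and ŷ′₁, …, ŷ′_N of K, and integers (b_{ij})_{1≤i,j≤N} with b_{jk} = −b_{kj} for all j. Assume: ŷ′_k = ŷ_k^{−1}; for every j ≠ k one has ŷ_k + 1 ≠ 0 and ŷ′_j = ŷ_j · ŷ_k^{[b_{kj}]₊} · (ŷ_k + 1)^{−b_{kj}}; and Ψ(ŷ_k) ≠ 0. Set η := +1 if Ψ(ŷ_k) > 0 and η := −1 otherwise. Then Ψ(ŷ′_k) = −Ψ(ŷ_k), and for every j ≠ k, Ψ(ŷ′_j) = Ψ(ŷ_j) + [η·b_{jk}]₊ · Ψ(ŷ_k), where [x]₊ := max(x, 0). -/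

import Mathlib

/-- tropical mutation of the vectors `Ψ(ŷⱼ)`.  Here `Ψ : K∖{0} → ℤ^N` is
additive on products and satisfies the non-archimedean inequality for the translation-
invariant linear order `le` on `ℤ^N`.  Given `ŷ'ₖ = ŷₖ⁻¹` and, for `j ≠ k`,
`ŷ'ⱼ = ŷⱼ · ŷₖ^{[b_{kj}]₊} · (ŷₖ+1)^{−b_{kj}}`, with `Ψ(ŷₖ) ≠ 0` and
`η = +1` if `Ψ(ŷₖ) > 0` (i.e. `le 0 (Ψ ŷₖ)`), `η = −1` otherwise, one has
`Ψ(ŷ'ₖ) = −Ψ(ŷₖ)` and `Ψ(ŷ'ⱼ) = Ψ(ŷⱼ) + [η·b_{jk}]₊ · Ψ(ŷₖ)` for `j ≠ k`. -/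
theorem stmt9 {K : Type*} [Field K] {N : ℕ} (hN : 1 ≤ N)
    (le : (Fin N → ℤ) → (Fin N → ℤ) → Prop)
    (hrefl : ∀ a, le a a)
    (hantisymm : ∀ a b, le a b → le b a → a = b)
    (htrans : ∀ a b c, le a b → le b c → le a c)
    (htotal : ∀ a b, le a b ∨ le b a)
    (haddinv : ∀ a b c, le a b → le (a + c) (b + c))
    (Ψ : K → (Fin N → ℤ))
    (hΨmul : ∀ f g : K, f ≠ 0 → g ≠ 0 → Ψ (f * g) = Ψ f + Ψ g)
    (hΨadd : ∀ f g : K, f ≠ 0 → g ≠ 0 → f + g ≠ 0 →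
      le (Ψ (f + g)) (Ψ f) ∨ le (Ψ (f + g)) (Ψ g))
    (k₀ : Fin N) (y y' : Fin N → K)
    (hy : ∀ j, y j ≠ 0) (hy' : ∀ j, y' j ≠ 0)
    (b : Fin N → Fin N → ℤ) (hskew : ∀ j, b j k₀ = - b k₀ j)
    (h'k : y' k₀ = (y k₀)⁻¹)
    (h'j : ∀ j, j ≠ k₀ → y k₀ + 1 ≠ 0 ∧
      y' j = y j * y k₀ ^ (max (b k₀ j) 0) * (y k₀ + 1) ^ (-(b k₀ j)))
    (hΨk : Ψ (y k₀) ≠ 0) :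
    Ψ (y' k₀) = - Ψ (y k₀) ∧
    ∀ j, j ≠ k₀ →
      (le 0 (Ψ (y k₀)) → Ψ (y' j) = Ψ (y j) + (max (b j k₀) 0) • Ψ (y k₀)) ∧
      (¬ le 0 (Ψ (y k₀)) → Ψ (y' j) = Ψ (y j) + (max (-(b j k₀)) 0) • Ψ (y k₀)) := by

  -- basic facts
  have hΨ1 : Ψ 1 = 0 := by
    have h := hΨmul 1 1 one_ne_zero one_ne_zero
    simp only [mul_one] at h
    have := left_eq_add.mp h
    exact this
  have hΨinv : ∀ f : K, f ≠ 0 → Ψ f⁻¹ = - Ψ f := by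
    intro f hf
    have h := hΨmul f f⁻¹ hf (inv_ne_zero hf)
    rw [mul_inv_cancel₀ hf, hΨ1] at h
    exact (neg_eq_of_add_eq_zero_right h.symm).symm
  have hΨzpow : ∀ f : K, f ≠ 0 → ∀ n : ℤ, Ψ (f ^ n) = n • Ψ f := by
    intro f hf n
    induction n using Int.induction_on with
    | zero => simpa using hΨ1
    | succ i ih =>
      rw [zpow_add_one₀ hf, hΨmul _ _ (zpow_ne_zero _ hf) hf, ih, add_smul, one_smul]
    | pred i ih =>
      rw [zpow_sub_one₀ hf, hΨmul _ _ (zpow_ne_zero _ hf) (inv_ne_zero hf), ih,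
        hΨinv f hf, sub_smul, one_smul, sub_eq_add_neg]
  -- dominant term rule
  have hsum : ∀ f g : K, f ≠ 0 → g ≠ 0 → f + g ≠ 0 → Ψ g ≠ Ψ f → le (Ψ g) (Ψ f) →
      Ψ (f + g) = Ψ f := by
    intro f g hf hg hfg hne hle
    have h1 : le (Ψ (f + g)) (Ψ f) := by
      rcases hΨadd f g hf hg hfg with h | h
      · exact h
      · exact htrans _ _ _ h hle
    have hΨneg : Ψ (-g) = Ψ g := by
      have hm1 : Ψ (-1 : K) = 0 := by
        have h := hΨmul (-1) (-1) (by norm_num) (by norm_num)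
        simp only [neg_mul, one_mul, neg_neg, hΨ1] at h
        funext i
        have := congrFun h i
        simp only [Pi.add_apply, Pi.zero_apply] at this ⊢
        omega
      have : (-g : K) = (-1) * g := by ring
      rw [this, hΨmul _ _ (by norm_num) hg, hm1, zero_add]
    have h2 : le (Ψ f) (Ψ (f + g)) := by
      have heq : (f + g) + (-g) = f := by ring
      rcases hΨadd (f + g) (-g) hfg (neg_ne_zero.mpr hg) (by rw [heq]; exact hf) with h | h
      · rwa [heq] at h
      · rw [heq, hΨneg] at h
        exact absurd (hantisymm _ _ h hle).symm hne
    exact hantisymm _ _ h1 h2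
  -- Ψ(y'ₖ)
  have hk : Ψ (y' k₀) = - Ψ (y k₀) := by rw [h'k, hΨinv _ (hy k₀)]
  refine ⟨hk, fun j hj => ?_⟩
  obtain ⟨hne1, hyj⟩ := h'j j hj
  set v := Ψ (y k₀) with hv
  set c := b k₀ j with hc
  have hmul : Ψ (y' j) = Ψ (y j) + (max c 0) • v + (-c) • Ψ (y k₀ + 1) := by
    rw [hyj, hΨmul _ _ (mul_ne_zero (hy j) (zpow_ne_zero _ (hy k₀))) (zpow_ne_zero _ hne1),
      hΨmul _ _ (hy j) (zpow_ne_zero _ (hy k₀)), hΨzpow _ (hy k₀), hΨzpow _ hne1]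
  have hbjk : b j k₀ = -c := hskew j
  constructor
  · intro hpos
    have hΨ1k : Ψ (y k₀ + 1) = v := by
      apply hsum (y k₀) 1 (hy k₀) one_ne_zero hne1
      · rw [hΨ1]; exact fun h => hΨk h.symm
      · rw [hΨ1]; exact hpos
    rw [hmul, hΨ1k, hbjk]
    have : max (- c) 0 = max c 0 + (-c) := by omega
    rw [this, add_smul, add_assoc]
  · intro hneg
    have hle0 : le v 0 := by
      rcases htotal 0 v with h | h
      · exact absurd h hneg
      · exact h
    have hΨ1k : Ψ (y k₀ + 1) = 0 := by
      have : Ψ (1 + y k₀) = Ψ (1 : K) := by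
        apply hsum 1 (y k₀) one_ne_zero (hy k₀) (by rwa [add_comm])
        · rw [hΨ1]; exact hΨk
        · rw [hΨ1]; exact hle0
      rw [add_comm] at this
      rw [this, hΨ1]
    rw [hmul, hΨ1k, smul_zero, add_zero, hbjk, neg_neg]
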